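/- Let m, n ≥ 2 and let {A_1,…,A_k} be a partition of [n] = {1,…,n} into k nonempty sets. Identify the vertex set of the Hamming graph H(n,m) with {0,1,…,m-1}^n, and for i ∈ {1,…,m-1} let F_i = {x ∈ {0,…,m-1}^n : there exists j ∈ [k] with x_a ≥ i for all a ∈ A_j}. Let G_{m-1} be the induced subgraph on F_{m-1}, let G_i be the induced subgraph on F_i \ F_{i+1} for i ∈ {1,…,m-2}, and let G_0 be the induced subgraph on the complement of F_1. Then the vertex sets of G_0,…,G_{m-1} partition {0,…,m-1}^n, and for every i ∈ {0,…,m-1} one has δ(G_i) = (m-1)·(n-k) + i·(k − max(|A_1|,…,|A_k|)). In particular, (m-1)·n − min{δ(G_0),…,δ(G_{m-1})} = (m-1)·max(k, |A_1|, …, |A_k|). -/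

import Mathlib

open scoped Classical

noncomputable section

/-- Degree of the vertex `v` in the subgraph of the Hamming graph induced on `V`:
the number of vertices of `V` at Hamming distance exactly `1` from `v`. -/
def indDeg {ι α : Type*} [Fintype ι] (V : Finset (ι → α)) (v : ι → α) : ℕ :=
  (V.filter fun w => hammingDist v w = 1).card

/-- Minimum degree `δ` of the subgraph of the Hamming graph induced on `V`
(it is `⊤ = +∞` for the empty graph). -/
def minDeg {ι α : Type*} [Fintype ι] (V : Finset (ι → α)) : ℕ∞ :=
  V.inf fun v => (indDeg V v : ℕ∞)

/-- Maximum degree `Δ` of the subgraph of the Hamming graph induced on `V`. -/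
def maxDeg {ι α : Type*} [Fintype ι] (V : Finset (ι → α)) : ℕ :=
  V.sup fun v => indDeg V v

/-- `Fset m n A i` is the filter `F_i = ↑{A_1^{(i)}, …, A_k^{(i)}}`: the set of vertices
`x ∈ {0,…,m-1}^n` having all entries indexed by some block `A j` at least `i`. -/
def Fset (m n k : ℕ) (A : Fin k → Finset (Fin n)) (i : ℕ) : Finset (Fin n → Fin m) :=
  Finset.univ.filter fun x => ∃ j : Fin k, ∀ a ∈ A j, i ≤ (x a : ℕ)

/-- The parts `G_0 = complement of F_1`, `G_i = F_i \ F_{i+1}` for `1 ≤ i ≤ m-2`, and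
`G_{m-1} = F_{m-1}`. -/
def Gset (m n k : ℕ) (A : Fin k → Finset (Fin n)) (i : ℕ) : Finset (Fin n → Fin m) :=
  if i = 0 then Finset.univ \ Fset m n k A 1
  else if i = m - 1 then Fset m n k A (m - 1)
  else Fset m n k A i \ Fset m n k A (i + 1)

/-- The maximum cardinality `max(|A_1|, …, |A_k|)` of a block of the partition. -/
def maxBlock {n k : ℕ} (A : Fin k → Finset (Fin n)) : ℕ :=
  Finset.univ.sup fun j => (A j).card
namespace HamAux
variable {m n k : ℕ}

/-- block infimum as ℕ∞ -/
def muE (A : Fin k → Finset (Fin n)) (x : Fin n → Fin m) (j : Fin k) : ℕ∞ :=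
  (A j).inf fun a => ((x a : ℕ) : ℕ∞)

/-- level -/
def levE (A : Fin k → Finset (Fin n)) (x : Fin n → Fin m) : ℕ∞ :=
  Finset.univ.sup (muE A x)

lemma muE_le_of_mem {A : Fin k → Finset (Fin n)} {x : Fin n → Fin m} {j : Fin k}
    {a : Fin n} (ha : a ∈ A j) : muE A x j ≤ ((x a : ℕ) : ℕ∞) :=
  Finset.inf_le ha

lemma muE_le_levE (A : Fin k → Finset (Fin n)) (x : Fin n → Fin m) (j : Fin k) :
    muE A x j ≤ levE A x := Finset.le_sup (Finset.mem_univ j)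

lemma levE_le (A : Fin k → Finset (Fin n)) (hA : ∀ j, (A j).Nonempty)
    (x : Fin n → Fin m) : levE A x ≤ ((m - 1 : ℕ) : ℕ∞) := by
  refine Finset.sup_le fun j _ => ?_
  obtain ⟨a, ha⟩ := hA j
  refine le_trans (muE_le_of_mem ha) ?_
  exact_mod_cast Nat.cast_le.2 (by omega : (x a : ℕ) ≤ m - 1)

lemma mem_Fset_iff {A : Fin k → Finset (Fin n)} {x : Fin n → Fin m} {i : ℕ} :
    x ∈ Fset m n k A i ↔ ∃ j, (i : ℕ∞) ≤ muE A x j := by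
  simp only [Fset, Finset.mem_filter, Finset.mem_univ, true_and, muE, Finset.le_inf_iff]
  constructor
  · rintro ⟨j, hj⟩; exact ⟨j, fun a ha => by exact_mod_cast hj a ha⟩
  · rintro ⟨j, hj⟩; exact ⟨j, fun a ha => by exact_mod_cast hj a ha⟩

lemma mem_Fset_iff_le_levE {A : Fin k → Finset (Fin n)} {x : Fin n → Fin m} {i : ℕ}
    (hi : 1 ≤ i) : x ∈ Fset m n k A i ↔ (i : ℕ∞) ≤ levE A x := by
  rw [mem_Fset_iff, levE]
  rw [Finset.le_sup_iff (show (⊥:ℕ∞) < (i:ℕ∞) by rw [bot_eq_zero]; exact_mod_cast (by omega : 0 < i))]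
  simp

lemma mem_Gset_iff {A : Fin k → Finset (Fin n)} (hA : ∀ j, (A j).Nonempty)
    (hm : 2 ≤ m) {x : Fin n → Fin m} {i : ℕ} (hi : i < m) :
    x ∈ Gset m n k A i ↔ levE A x = (i : ℕ∞) := by
  have hle := levE_le A hA x
  rcases eq_or_ne i 0 with rfl | h0
  · rw [Gset, if_pos rfl, Finset.mem_sdiff]
    simp only [Finset.mem_univ, true_and]
    rw [mem_Fset_iff_le_levE le_rfl]
    constructor
    · intro h
      have : levE A x < ((1:ℕ):ℕ∞) := lt_of_not_ge h
      exact_mod_cast le_antisymm (by exact_mod_cast Order.le_of_lt_add_one (by exact_mod_cast this)) bot_le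
    · intro h; rw [h]; simp
  · rcases eq_or_ne i (m-1) with rfl | h1
    · rw [Gset, if_neg h0, if_pos rfl, mem_Fset_iff_le_levE (by omega)]
      exact ⟨fun h => le_antisymm hle h, fun h => h.ge⟩
    · rw [Gset, if_neg h0, if_neg h1, Finset.mem_sdiff,
        mem_Fset_iff_le_levE (by omega), mem_Fset_iff_le_levE (by omega)]
      constructor
      · rintro ⟨h2, h3⟩
        have h3' : levE A x < ((i+1 : ℕ) : ℕ∞) := lt_of_not_ge h3
        have : levE A x ≤ (i : ℕ∞) := by
          exact_mod_cast Order.le_of_lt_add_one (by exact_mod_cast h3')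
        exact le_antisymm this h2
      · intro h; rw [h]
        constructor
        · exact le_rfl
        · intro hc; exact absurd (by exact_mod_cast hc) (by omega : ¬ (i+1 ≤ i))

section CntLemmas
variable {m : ℕ}

lemma card_filter_le (i : ℕ) (hi : i < m) :
    (Finset.univ.filter fun c : Fin m => (c : ℕ) ≤ i).card = i + 1 := by
  have : (Finset.univ.filter fun c : Fin m => (c : ℕ) ≤ i) =
      (Finset.range (i+1)).attachFin (fun a ha => by
        have := Finset.mem_range.1 ha; omega) := by
    ext c
    simp [Finset.mem_attachFin, Nat.lt_succ_iff]
  rw [this, Finset.card_attachFin, Finset.card_range]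

lemma card_filter_ge (i : ℕ) :
    (Finset.univ.filter fun c : Fin m => i ≤ (c : ℕ)).card = m - i := by
  rcases Nat.eq_zero_or_pos i with rfl | hpos
  · simp
  rcases Nat.lt_or_ge i m with h | h
  · have h1 : (Finset.univ.filter fun c : Fin m => i ≤ (c : ℕ)) =
        Finset.univ \ (Finset.univ.filter fun c : Fin m => (c : ℕ) ≤ i - 1) := by
      ext c; simp; omega
    rw [h1, Finset.card_sdiff_of_subset (Finset.filter_subset _ _), Finset.card_univ,
        card_filter_le (i-1) (by omega)]
    simp; omega
  · have : (Finset.univ.filter fun c : Fin m => i ≤ (c : ℕ)) = ∅ := by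
      ext c; simp; omega
    rw [this]; simp; omega

lemma filter_and_ne_card {p : Fin m → Prop} {e : Fin m} (he : p e) :
    (Finset.univ.filter fun c : Fin m => c ≠ e ∧ p c).card =
      (Finset.univ.filter fun c : Fin m => p c).card - 1 := by
  have : (Finset.univ.filter fun c : Fin m => c ≠ e ∧ p c) =
      (Finset.univ.filter fun c : Fin m => p c).erase e := by
    ext c; simp [Finset.mem_erase, and_comm]
  rw [this, Finset.card_erase_of_mem (by simp [he])]

/-- the per-coordinate neighbour count -/
def cnt (m i : ℕ) (M s : ℕ∞) : ℕ :=
  if (i : ℕ∞) ≤ M then (if s ≤ (i : ℕ∞) then m - 1 else i)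
  else (if s ≤ (i : ℕ∞) then m - 1 - i else 0)

lemma cnt_card {i : ℕ} (hi : i < m) (e : Fin m) (M s : ℕ∞)
    (hM : M ≤ (i : ℕ∞)) (hlev : max M (min ((e : ℕ) : ℕ∞) s) = (i : ℕ∞)) :
    (Finset.univ.filter fun c : Fin m =>
        c ≠ e ∧ max M (min ((c : ℕ) : ℕ∞) s) = (i : ℕ∞)).card = cnt m i M s := by
  rw [cnt]
  by_cases hMi : (i : ℕ∞) ≤ M
  · rw [if_pos hMi]
    have hM' : M = (i : ℕ∞) := le_antisymm hM hMi
    subst hM'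
    by_cases hs : s ≤ (i : ℕ∞)
    · rw [if_pos hs]
      have hp : ∀ c : Fin m, max ((i:ℕ∞)) (min ((c : ℕ) : ℕ∞) s) = (i : ℕ∞) := by
        intro c
        exact max_eq_left (le_trans (min_le_right _ _) hs)
      have : (Finset.univ.filter fun c : Fin m =>
          c ≠ e ∧ max ((i:ℕ∞)) (min ((c : ℕ) : ℕ∞) s) = (i : ℕ∞)) =
          Finset.univ.filter fun c : Fin m => c ≠ e := by
        ext c; simp [hp]
      rw [this, Finset.filter_ne', Finset.card_erase_of_mem (Finset.mem_univ e),
        Finset.card_univ, Fintype.card_fin]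
    · rw [if_neg hs]
      push_neg at hs
      have he' : (e : ℕ) ≤ i := by
        have h1 : min ((e : ℕ) : ℕ∞) s ≤ (i : ℕ∞) := by
          rw [← hlev]; exact le_max_right _ _
        rcases min_le_iff.1 h1 with h | h
        · exact_mod_cast h
        · exact absurd h (not_le.2 hs)
      have hp : ∀ c : Fin m, (max ((i:ℕ∞)) (min ((c : ℕ) : ℕ∞) s) = (i : ℕ∞)) ↔ (c : ℕ) ≤ i := by
        intro c
        rw [max_eq_left_iff, min_le_iff]
        constructor
        · rintro (h | h)
          · exact_mod_cast h
          · exact absurd h (not_le.2 hs)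
        · intro h; exact Or.inl (by exact_mod_cast h)
      have heq : (Finset.univ.filter fun c : Fin m =>
          c ≠ e ∧ max ((i:ℕ∞)) (min ((c : ℕ) : ℕ∞) s) = (i : ℕ∞)) =
          (Finset.univ.filter fun c : Fin m => (c : ℕ) ≤ i).erase e := by
        ext c; simp [hp, Finset.mem_erase, and_comm]
      rw [heq, Finset.card_erase_of_mem (by simp [he']), card_filter_le i hi]; omega
  · rw [if_neg hMi]
    push_neg at hMi
    have hmin : min ((e : ℕ) : ℕ∞) s = (i : ℕ∞) := by
      rcases max_cases M (min ((e : ℕ) : ℕ∞) s) with ⟨h1, h2⟩ | ⟨h1, h2⟩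
      · rw [h1] at hlev; exact absurd hlev hMi.ne
      · rw [h1] at hlev; exact hlev
    have hei : (i : ℕ∞) ≤ ((e : ℕ) : ℕ∞) := hmin ▸ min_le_left _ _
    have hsi : (i : ℕ∞) ≤ s := hmin ▸ min_le_right _ _
    have hp : ∀ c : Fin m, (max M (min ((c : ℕ) : ℕ∞) s) = (i : ℕ∞)) ↔
        min ((c : ℕ) : ℕ∞) s = (i : ℕ∞) := by
      intro c
      constructor
      · intro h
        rcases max_cases M (min ((c : ℕ) : ℕ∞) s) with ⟨h1, h2⟩ | ⟨h1, h2⟩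
        · rw [h1] at h; exact absurd h hMi.ne
        · rw [h1] at h; exact h
      · intro h; rw [max_eq_right (h ▸ hMi.le), h]
    by_cases hs : s ≤ (i : ℕ∞)
    · rw [if_pos hs]
      have hs' : s = (i : ℕ∞) := le_antisymm hs hsi
      subst hs'
      have hp2 : ∀ c : Fin m, (min ((c : ℕ) : ℕ∞) ((i:ℕ∞)) = (i : ℕ∞)) ↔ i ≤ (c : ℕ) := by
        intro c
        rw [min_eq_right_iff]
        exact ⟨fun h => by exact_mod_cast h, fun h => by exact_mod_cast h⟩
      have heq : (Finset.univ.filter fun c : Fin m =>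
          c ≠ e ∧ max M (min ((c : ℕ) : ℕ∞) ((i:ℕ∞))) = (i : ℕ∞)) =
          (Finset.univ.filter fun c : Fin m => i ≤ (c : ℕ)).erase e := by
        ext c
        simp only [Finset.mem_filter, Finset.mem_univ, true_and, hp, hp2, Finset.mem_erase]
      rw [heq, Finset.card_erase_of_mem
        (by simp only [Finset.mem_filter, Finset.mem_univ, true_and]; exact_mod_cast hei),
        card_filter_ge i]
      omega
    · rw [if_neg hs]
      push_neg at hs
      have he' : (e : ℕ) = i := by
        have := hmin
        rcases min_cases ((e : ℕ) : ℕ∞) s with ⟨h1, h2⟩ | ⟨h1, h2⟩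
        · rw [h1] at this; exact_mod_cast this
        · rw [h1] at this; exact absurd this.le (not_le.2 hs)
      have : (Finset.univ.filter fun c : Fin m =>
          c ≠ e ∧ max M (min ((c : ℕ) : ℕ∞) s) = (i : ℕ∞)) = ∅ := by
        ext c
        simp only [Finset.mem_filter, Finset.mem_univ, true_and, hp, Finset.notMem_empty,
          iff_false, not_and]
        intro hc hcmin
        have : (c : ℕ) = i := by
          rcases min_cases ((c : ℕ) : ℕ∞) s with ⟨h1, h2⟩ | ⟨h1, h2⟩
          · rw [h1] at hcmin; exact_mod_cast hcmin
          · rw [h1] at hcmin; exact absurd hcmin.le (not_le.2 hs)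
        exact hc (Fin.ext (by rw [this, he']))
      rw [this]; simp
end CntLemmas

section Struct
variable {m n k : ℕ} {A : Fin k → Finset (Fin n)}

lemma exists_blk (hcover : Finset.univ.biUnion A = (Finset.univ : Finset (Fin n)))
    (a : Fin n) : ∃ j, a ∈ A j := by
  have : a ∈ Finset.univ.biUnion A := hcover ▸ Finset.mem_univ a
  obtain ⟨j, _, hj⟩ := Finset.mem_biUnion.1 this
  exact ⟨j, hj⟩

def blk (hcover : Finset.univ.biUnion A = (Finset.univ : Finset (Fin n)))
    (a : Fin n) : Fin k := (exists_blk hcover a).choose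

lemma blk_mem (hcover : Finset.univ.biUnion A = (Finset.univ : Finset (Fin n)))
    (a : Fin n) : a ∈ A (blk hcover a) := (exists_blk hcover a).choose_spec

lemma blk_eq (hdisj : ∀ i j : Fin k, i ≠ j → Disjoint (A i) (A j))
    (hcover : Finset.univ.biUnion A = (Finset.univ : Finset (Fin n)))
    {a : Fin n} {j : Fin k} (ha : a ∈ A j) : blk hcover a = j := by
  by_contra h
  exact (Finset.disjoint_left.1 (hdisj _ _ h)) (blk_mem hcover a) ha

/-- sup of `muE` over the other blocks -/
def Msup (A : Fin k → Finset (Fin n)) (x : Fin n → Fin m) (j : Fin k) : ℕ∞ :=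
  (Finset.univ.erase j).sup (muE A x)

/-- inf of the other coordinates in the block of `a` -/
def sfun (hcover : Finset.univ.biUnion A = (Finset.univ : Finset (Fin n)))
    (x : Fin n → Fin m) (a : Fin n) : ℕ∞ :=
  ((A (blk hcover a)).erase a).inf fun b => ((x b : ℕ) : ℕ∞)

lemma levE_eq_max (x : Fin n → Fin m) (j : Fin k) :
    levE A x = max (Msup A x j) (muE A x j) := by
  rw [levE, ← Finset.insert_erase (Finset.mem_univ j), Finset.sup_insert]
  rw [max_comm]; rfl

lemma Msup_le (x : Fin n → Fin m) (j : Fin k) : Msup A x j ≤ levE A x :=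
  Finset.sup_mono (Finset.erase_subset _ _)

lemma muE_eq_min {a : Fin n} {j : Fin k} (ha : a ∈ A j) (x : Fin n → Fin m) :
    muE A x j = min ((x a : ℕ) : ℕ∞) (((A j).erase a).inf fun b => ((x b : ℕ) : ℕ∞)) := by
  conv_lhs => rw [muE, ← Finset.insert_erase ha]
  rw [Finset.inf_insert]

lemma muE_update_other (hdisj : ∀ i j : Fin k, i ≠ j → Disjoint (A i) (A j))
    {a : Fin n} {j j' : Fin k} (ha : a ∈ A j) (hj' : j' ≠ j)
    (x : Fin n → Fin m) (c : Fin m) :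
    muE A (Function.update x a c) j' = muE A x j' := by
  refine Finset.inf_congr rfl fun b hb => ?_
  have hba : b ≠ a := by
    rintro rfl
    exact (Finset.disjoint_left.1 (hdisj _ _ hj')) hb ha
  rw [Function.update_of_ne hba]

lemma Msup_update (hdisj : ∀ i j : Fin k, i ≠ j → Disjoint (A i) (A j))
    {a : Fin n} {j : Fin k} (ha : a ∈ A j) (x : Fin n → Fin m) (c : Fin m) :
    Msup A (Function.update x a c) j = Msup A x j := by
  refine Finset.sup_congr rfl fun j' hj' => ?_
  exact muE_update_other hdisj ha (Finset.ne_of_mem_erase hj') x c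

lemma muE_update_self {a : Fin n} {j : Fin k} (ha : a ∈ A j)
    (x : Fin n → Fin m) (c : Fin m) :
    muE A (Function.update x a c) j =
      min ((c : ℕ) : ℕ∞) (((A j).erase a).inf fun b => ((x b : ℕ) : ℕ∞)) := by
  rw [muE_eq_min ha, Function.update_self]
  congr 1
  refine Finset.inf_congr rfl fun b hb => ?_
  rw [Function.update_of_ne (Finset.ne_of_mem_erase hb)]

lemma levE_update (hdisj : ∀ i j : Fin k, i ≠ j → Disjoint (A i) (A j))
    {a : Fin n} {j : Fin k} (ha : a ∈ A j) (x : Fin n → Fin m) (c : Fin m) :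
    levE A (Function.update x a c) =
      max (Msup A x j) (min ((c : ℕ) : ℕ∞)
        (((A j).erase a).inf fun b => ((x b : ℕ) : ℕ∞))) := by
  rw [levE_eq_max (Function.update x a c) j, Msup_update hdisj ha, muE_update_self ha]

lemma hammingC (x w : Fin n → Fin m) :
    @hammingDist (Fin n) (fun _ => Fin m) _ (fun _ a b => Classical.propDecidable (a=b)) x w
    = (Finset.univ.filter fun b => x b ≠ w b).card := by
  unfold hammingDist; congr!

lemma hamming_update {a : Fin n} {x : Fin n → Fin m} {c : Fin m} (hc : c ≠ x a) :
    (Finset.univ.filter fun b => x b ≠ Function.update x a c b) = {a} := by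
  ext b
  rcases eq_or_ne b a with rfl | hb
  · simp [hc.symm]
  · simp [hb, Function.update_of_ne hb]

lemma indDeg_eq_sum (V : Finset (Fin n → Fin m)) (x : Fin n → Fin m) :
    indDeg V x = ∑ a : Fin n,
      (Finset.univ.filter fun c : Fin m => c ≠ x a ∧ Function.update x a c ∈ V).card := by
  classical
  rw [← Finset.card_sigma]
  rw [indDeg]
  simp only [hammingC]
  refine (Finset.card_bij (fun p _ => Function.update x p.1 p.2) ?_ ?_ ?_).symm
  · rintro ⟨a, c⟩ hp
    simp only [Finset.mem_sigma, Finset.mem_univ, true_and, Finset.mem_filter] at hp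
    simp only [Finset.mem_filter]
    refine ⟨hp.2, ?_⟩
    rw [hamming_update hp.1, Finset.card_singleton]
  · rintro ⟨a, c⟩ hp ⟨a', c'⟩ hp' h
    simp only [Finset.mem_sigma, Finset.mem_univ, true_and, Finset.mem_filter] at hp hp'
    change Function.update x a c = Function.update x a' c' at h
    rcases eq_or_ne a a' with rfl | haa
    · have : c = c' := by
        have := congrFun h a
        simpa using this
      simp [this]
    · exfalso
      have h1 := congrFun h a
      rw [Function.update_self, Function.update_of_ne haa] at h1
      exact hp.1 h1
  · intro w hw
    simp only [Finset.mem_filter] at hw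
    have h1 : (Finset.univ.filter fun b => x b ≠ w b).card = 1 := hw.2
    obtain ⟨a, haeq⟩ := Finset.card_eq_one.1 h1
    have hwa : x a ≠ w a := by
      have : a ∈ Finset.univ.filter fun b => x b ≠ w b := by rw [haeq]; simp
      exact (Finset.mem_filter.1 this).2
    have hweq : Function.update x a (w a) = w := by
      funext b
      rcases eq_or_ne b a with rfl | hb
      · rw [Function.update_self]
      · rw [Function.update_of_ne hb]
        by_contra hxb
        have : b ∈ Finset.univ.filter fun b => x b ≠ w b := by simp [hxb]
        rw [haeq, Finset.mem_singleton] at this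
        exact hb this
    refine ⟨⟨a, w a⟩, ?_, hweq⟩
    simp only [Finset.mem_sigma, Finset.mem_univ, true_and, Finset.mem_filter]
    exact ⟨Ne.symm hwa, by rw [hweq]; exact hw.1⟩

lemma deg_formula (hA : ∀ j, (A j).Nonempty)
    (hdisj : ∀ i j : Fin k, i ≠ j → Disjoint (A i) (A j))
    (hcover : Finset.univ.biUnion A = (Finset.univ : Finset (Fin n)))
    (hm : 2 ≤ m) {i : ℕ} (hi : i < m) {x : Fin n → Fin m}
    (hx : levE A x = (i : ℕ∞)) :
    indDeg (Gset m n k A i) x =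
      ∑ a : Fin n, cnt m i (Msup A x (blk hcover a)) (sfun hcover x a) := by
  rw [indDeg_eq_sum]
  refine Finset.sum_congr rfl fun a _ => ?_
  set j := blk hcover a with hj
  have ha : a ∈ A j := blk_mem hcover a
  have hfe : (Finset.univ.filter fun c : Fin m =>
      c ≠ x a ∧ Function.update x a c ∈ Gset m n k A i) =
      (Finset.univ.filter fun c : Fin m =>
        c ≠ x a ∧ max (Msup A x j) (min ((c : ℕ) : ℕ∞) (sfun hcover x a)) = (i : ℕ∞)) := by
    refine Finset.filter_congr fun c _ => ?_
    rw [mem_Gset_iff hA hm hi, levE_update hdisj ha]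
    rfl
  rw [hfe]
  refine cnt_card hi (x a) _ _ ?_ ?_
  · rw [← hx]; exact Msup_le x j
  · rw [← hx, levE_eq_max x j, muE_eq_min ha x]; rfl
end Struct

section Bounds
variable {m n k : ℕ} {A : Fin k → Finset (Fin n)}

lemma sfun_eq (hdisj : ∀ i j : Fin k, i ≠ j → Disjoint (A i) (A j))
    (hcover : Finset.univ.biUnion A = (Finset.univ : Finset (Fin n)))
    {a : Fin n} {j : Fin k} (ha : a ∈ A j) (x : Fin n → Fin m) :
    sfun hcover x a = ((A j).erase a).inf fun b => ((x b : ℕ) : ℕ∞) := by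
  rw [sfun, blk_eq hdisj hcover ha]

lemma sfun_few (hdisj : ∀ i j : Fin k, i ≠ j → Disjoint (A i) (A j))
    (hcover : Finset.univ.biUnion A = (Finset.univ : Finset (Fin n)))
    {i : ℕ} {x : Fin n → Fin m} (hx : levE A x = (i : ℕ∞)) (j : Fin k) :
    ((A j).filter fun a => (i : ℕ∞) < sfun hcover x a).card ≤ 1 := by
  rw [Finset.card_le_one]
  intro a ha b hb
  simp only [Finset.mem_filter] at ha hb
  by_contra hab
  have key : ((i + 1 : ℕ) : ℕ∞) ≤ muE A x j := by
    refine Finset.le_inf fun b' hb' => ?_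
    have hlt : (i : ℕ∞) < ((x b' : ℕ) : ℕ∞) := by
      rcases eq_or_ne b' a with rfl | hba
      · refine lt_of_lt_of_le hb.2 ?_
        rw [sfun_eq hdisj hcover hb.1]
        exact Finset.inf_le (Finset.mem_erase.2 ⟨hab, ha.1⟩)
      · refine lt_of_lt_of_le ha.2 ?_
        rw [sfun_eq hdisj hcover ha.1]
        exact Finset.inf_le (Finset.mem_erase.2 ⟨hba, hb'⟩)
    exact_mod_cast Nat.cast_lt.1 (by exact_mod_cast hlt)
  have h2 : muE A x j ≤ (i : ℕ∞) := hx ▸ muE_le_levE A x j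
  have := le_trans key h2
  exact absurd (by exact_mod_cast this : i + 1 ≤ i) (by omega)

lemma block_sum_hi (hdisj : ∀ i j : Fin k, i ≠ j → Disjoint (A i) (A j))
    (hcover : Finset.univ.biUnion A = (Finset.univ : Finset (Fin n)))
    {i : ℕ} (him : i < m) {x : Fin n → Fin m} (hx : levE A x = (i : ℕ∞))
    {j : Fin k} (hb1 : 1 ≤ (A j).card) (hMj : (i : ℕ∞) ≤ Msup A x j) :
    (((A j).card : ℤ) - 1) * ((m : ℤ) - 1) + (i : ℤ) ≤
      ∑ a ∈ A j, (cnt m i (Msup A x (blk hcover a)) (sfun hcover x a) : ℤ) := by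
  have hpt : ∀ a ∈ A j, (cnt m i (Msup A x (blk hcover a)) (sfun hcover x a) : ℤ) =
      if (i : ℕ∞) < sfun hcover x a then (i : ℤ) else ((m : ℤ) - 1) := by
    intro a ha
    rw [blk_eq hdisj hcover ha, cnt, if_pos hMj]
    by_cases hs : sfun hcover x a ≤ (i : ℕ∞)
    · rw [if_pos hs, if_neg (not_lt.2 hs)]; push_cast; omega
    · rw [if_neg hs, if_pos (not_le.1 hs)]
  rw [Finset.sum_congr rfl hpt, Finset.sum_ite, Finset.sum_const, Finset.sum_const,
    nsmul_eq_mul, nsmul_eq_mul]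
  set c1 := ((A j).filter fun a => (i : ℕ∞) < sfun hcover x a).card with hc1
  set c2 := ((A j).filter fun a => ¬ (i : ℕ∞) < sfun hcover x a).card with hc2
  have hcc : c1 + c2 = (A j).card := Finset.card_filter_add_card_filter_not _
  have htle : c1 ≤ 1 := sfun_few hdisj hcover hx j
  have hb : 1 ≤ ((A j).card : ℤ) := by exact_mod_cast hb1
  have hcz : (c1 : ℤ) + c2 = (A j).card := by exact_mod_cast hcc
  have hi1 : (i : ℤ) ≤ (m : ℤ) - 1 := by
    have : (i:ℤ) < m := by exact_mod_cast him
    omega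
  interval_cases c1
  · simp only [Nat.cast_zero, zero_mul, zero_add] at hcz ⊢
    nlinarith
  · simp only [Nat.cast_one, one_mul] at hcz ⊢
    nlinarith

lemma block_sum_lo (hdisj : ∀ i j : Fin k, i ≠ j → Disjoint (A i) (A j))
    (hcover : Finset.univ.biUnion A = (Finset.univ : Finset (Fin n)))
    {i : ℕ} (him : i < m) {x : Fin n → Fin m} (hx : levE A x = (i : ℕ∞))
    {j : Fin k} (hb1 : 1 ≤ (A j).card) (hMj : Msup A x j < (i : ℕ∞)) :
    (((A j).card : ℤ) - 1) * ((m : ℤ) - 1 - (i : ℤ)) ≤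
      ∑ a ∈ A j, (cnt m i (Msup A x (blk hcover a)) (sfun hcover x a) : ℤ) := by
  have hpt : ∀ a ∈ A j, (cnt m i (Msup A x (blk hcover a)) (sfun hcover x a) : ℤ) =
      if (i : ℕ∞) < sfun hcover x a then 0 else ((m : ℤ) - 1 - i) := by
    intro a ha
    rw [blk_eq hdisj hcover ha, cnt, if_neg (not_le.2 hMj)]
    by_cases hs : sfun hcover x a ≤ (i : ℕ∞)
    · rw [if_pos hs, if_neg (not_lt.2 hs)]; push_cast; omega
    · rw [if_neg hs, if_pos (not_le.1 hs)]; simp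
  rw [Finset.sum_congr rfl hpt, Finset.sum_ite, Finset.sum_const, Finset.sum_const,
    smul_zero, nsmul_eq_mul, zero_add]
  set c1 := ((A j).filter fun a => (i : ℕ∞) < sfun hcover x a).card with hc1
  set c2 := ((A j).filter fun a => ¬ (i : ℕ∞) < sfun hcover x a).card with hc2
  have hcc : c1 + c2 = (A j).card := Finset.card_filter_add_card_filter_not _
  have htle : c1 ≤ 1 := sfun_few hdisj hcover hx j
  have hb : 1 ≤ ((A j).card : ℤ) := by exact_mod_cast hb1
  have hcz : (c1 : ℤ) + c2 = (A j).card := by exact_mod_cast hcc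
  have hmi : (0:ℤ) ≤ (m : ℤ) - 1 - i := by
    have : (i:ℤ) < m := by exact_mod_cast him
    omega
  interval_cases c1
  · simp only [Nat.cast_zero, zero_add] at hcz
    nlinarith
  · simp only [Nat.cast_one] at hcz
    nlinarith
end Bounds

section Total
variable {m n k : ℕ} {A : Fin k → Finset (Fin n)}

lemma sum_split (hdisj : ∀ i j : Fin k, i ≠ j → Disjoint (A i) (A j))
    (hcover : Finset.univ.biUnion A = (Finset.univ : Finset (Fin n)))
    (f : Fin n → ℤ) : ∑ a : Fin n, f a = ∑ j : Fin k, ∑ a ∈ A j, f a := by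
  rw [← hcover, Finset.sum_biUnion]
  intro a _ b _ hab
  exact Finset.disjoint_coe.1 (by exact_mod_cast hdisj a b hab)

lemma card_sum (hdisj : ∀ i j : Fin k, i ≠ j → Disjoint (A i) (A j))
    (hcover : Finset.univ.biUnion A = (Finset.univ : Finset (Fin n))) :
    ∑ j : Fin k, (A j).card = n := by
  rw [← Finset.card_biUnion (fun a _ b _ hab => hdisj a b hab), hcover,
    Finset.card_univ, Fintype.card_fin]

lemma k_pos (hcover : Finset.univ.biUnion A = (Finset.univ : Finset (Fin n)))
    (hn : 1 ≤ n) : 0 < k := by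
  have h0 : (0 : ℕ) < n := hn
  have : (⟨0, h0⟩ : Fin n) ∈ Finset.univ.biUnion A := hcover ▸ Finset.mem_univ _
  obtain ⟨j, _, _⟩ := Finset.mem_biUnion.1 this
  exact lt_of_le_of_lt (Nat.zero_le _) j.2

lemma univ_sum_g (hdisj : ∀ i j : Fin k, i ≠ j → Disjoint (A i) (A j))
    (hcover : Finset.univ.biUnion A = (Finset.univ : Finset (Fin n))) (i : ℕ) :
    ∑ j : Fin k, ((((A j).card : ℤ) - 1) * ((m : ℤ) - 1) + (i : ℤ)) =
      ((n : ℤ) - (k : ℤ)) * ((m : ℤ) - 1) + (k : ℤ) * (i : ℤ) := by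
  rw [Finset.sum_add_distrib, Finset.sum_const, ← Finset.sum_mul, Finset.sum_sub_distrib,
    Finset.sum_const, Finset.card_univ, Fintype.card_fin]
  have h1 : ∑ j : Fin k, ((A j).card : ℤ) = (n : ℤ) := by
    exact_mod_cast congrArg (Nat.cast : ℕ → ℤ) (card_sum hdisj hcover)
  rw [h1]
  push_cast
  ring

lemma muE_eq_of_Msup_lt {i : ℕ} {x : Fin n → Fin m} (hx : levE A x = (i : ℕ∞))
    {J : Fin k} (hJ : Msup A x J < (i : ℕ∞)) : muE A x J = (i : ℕ∞) := by
  have h := levE_eq_max (A := A) x J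
  rw [hx] at h
  rcases max_cases (Msup A x J) (muE A x J) with ⟨h1, _⟩ | ⟨h1, _⟩
  · rw [h1] at h; exact absurd h.symm hJ.ne
  · rw [h1] at h; exact h.symm

lemma total_lb (hA : ∀ j, (A j).Nonempty)
    (hdisj : ∀ i j : Fin k, i ≠ j → Disjoint (A i) (A j))
    (hcover : Finset.univ.biUnion A = (Finset.univ : Finset (Fin n)))
    {i : ℕ} (him : i < m) {x : Fin n → Fin m} (hx : levE A x = (i : ℕ∞)) :
    ((m : ℤ) - 1) * ((n : ℤ) - (k : ℤ)) + (i : ℤ) * ((k : ℤ) - (maxBlock A : ℤ)) ≤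
      ∑ a : Fin n, (cnt m i (Msup A x (blk hcover a)) (sfun hcover x a) : ℤ) := by
  rw [sum_split hdisj hcover]
  have hb1 : ∀ j, 1 ≤ (A j).card := fun j => Finset.card_pos.2 (hA j)
  have hiz : (0 : ℤ) ≤ (i : ℤ) := Int.natCast_nonneg i
  have hBz : (0 : ℤ) ≤ (maxBlock A : ℤ) := Int.natCast_nonneg _
  by_cases hall : ∀ j, (i : ℕ∞) ≤ Msup A x j
  · have hsum : ∑ j : Fin k, ((((A j).card : ℤ) - 1) * ((m : ℤ) - 1) + (i : ℤ)) ≤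
        ∑ j : Fin k, ∑ a ∈ A j, (cnt m i (Msup A x (blk hcover a)) (sfun hcover x a) : ℤ) :=
      Finset.sum_le_sum fun j _ => block_sum_hi hdisj hcover him hx (hb1 j) (hall j)
    rw [univ_sum_g hdisj hcover i] at hsum
    nlinarith [mul_nonneg hiz hBz]
  · push_neg at hall
    obtain ⟨J, hJ⟩ := hall
    have hmuJ : muE A x J = (i : ℕ∞) := muE_eq_of_Msup_lt hx hJ
    have hother : ∀ j, j ≠ J → (i : ℕ∞) ≤ Msup A x j := by
      intro j hj
      rw [← hmuJ]
      exact Finset.le_sup (Finset.mem_erase.2 ⟨hj.symm, Finset.mem_univ J⟩)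
    set F := fun j : Fin k => ∑ a ∈ A j, (cnt m i (Msup A x (blk hcover a)) (sfun hcover x a) : ℤ)
      with hF
    have hsplit : ∑ j ∈ Finset.univ.erase J, F j + F J = ∑ j : Fin k, F j :=
      Finset.sum_erase_add _ _ (Finset.mem_univ J)
    have hJlo : (((A J).card : ℤ) - 1) * ((m : ℤ) - 1 - (i : ℤ)) ≤ F J :=
      block_sum_lo hdisj hcover him hx (hb1 J) hJ
    set g := fun j : Fin k => (((A j).card : ℤ) - 1) * ((m : ℤ) - 1) + (i : ℤ) with hg
    have herase : ∑ j ∈ Finset.univ.erase J, g j ≤ ∑ j ∈ Finset.univ.erase J, F j :=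
      Finset.sum_le_sum fun j hj =>
        block_sum_hi hdisj hcover him hx (hb1 j) (hother j (Finset.ne_of_mem_erase hj))
    have hgsplit : ∑ j ∈ Finset.univ.erase J, g j + g J = ∑ j : Fin k, g j :=
      Finset.sum_erase_add _ _ (Finset.mem_univ J)
    have hguniv : ∑ j : Fin k, g j = ((n : ℤ) - (k : ℤ)) * ((m : ℤ) - 1) + (k : ℤ) * (i : ℤ) :=
      univ_sum_g hdisj hcover i
    have hBJ : ((A J).card : ℤ) ≤ (maxBlock A : ℤ) := by
      exact_mod_cast Finset.le_sup (f := fun j => (A j).card) (Finset.mem_univ J)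
    have hgJ : g J = (((A J).card : ℤ) - 1) * ((m : ℤ) - 1) + (i : ℤ) := rfl
    nlinarith [mul_le_mul_of_nonneg_left hBJ hiz]
end Total

section Extremal
variable {m n k : ℕ} {A : Fin k → Finset (Fin n)}

def rep (hA : ∀ j, (A j).Nonempty) (j : Fin k) : Fin n := (hA j).choose

lemma rep_mem (hA : ∀ j, (A j).Nonempty) (j : Fin k) : rep hA j ∈ A j := (hA j).choose_spec

def xext (hA : ∀ j, (A j).Nonempty)
    (hcover : Finset.univ.biUnion A = (Finset.univ : Finset (Fin n)))
    (J : Fin k) (i : ℕ) (him : i < m) : Fin n → Fin m := fun a =>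
  if a = rep hA (blk hcover a) then
    (if blk hcover a = J then ⟨i, him⟩ else ⟨0, by omega⟩)
  else ⟨m - 1, by omega⟩

variable (hA : ∀ j, (A j).Nonempty)
    (hdisj : ∀ i j : Fin k, i ≠ j → Disjoint (A i) (A j))
    (hcover : Finset.univ.biUnion A = (Finset.univ : Finset (Fin n)))
    {J : Fin k} {i : ℕ} (him : i < m)
include hA hdisj hcover him

lemma xext_rep_J : ((xext hA hcover J i him (rep hA J) : Fin m) : ℕ) = i := by
  rw [xext]
  simp [blk_eq hdisj hcover (rep_mem hA J)]

lemma xext_rep_ne {j : Fin k} (hj : j ≠ J) :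
    ((xext hA hcover J i him (rep hA j) : Fin m) : ℕ) = 0 := by
  rw [xext]
  simp [blk_eq hdisj hcover (rep_mem hA j), hj]

lemma xext_nonrep {a : Fin n} {j : Fin k} (ha : a ∈ A j) (hr : a ≠ rep hA j) :
    ((xext hA hcover J i him a : Fin m) : ℕ) = m - 1 := by
  rw [xext]
  simp [blk_eq hdisj hcover ha, hr]

lemma xext_muJ : muE A (xext hA hcover J i him) J = (i : ℕ∞) := by
  apply le_antisymm
  · refine le_trans (muE_le_of_mem (rep_mem hA J)) ?_
    rw [xext_rep_J hA hdisj hcover him]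
  · refine Finset.le_inf fun b hb => ?_
    rcases eq_or_ne b (rep hA J) with rfl | hbr
    · rw [xext_rep_J hA hdisj hcover him]
    · rw [xext_nonrep hA hdisj hcover him hb hbr]
      exact_mod_cast (by omega : i ≤ m - 1)

lemma xext_mu_ne {j : Fin k} (hj : j ≠ J) :
    muE A (xext hA hcover J i him) j = (0 : ℕ∞) := by
  apply le_antisymm
  · refine le_trans (muE_le_of_mem (rep_mem hA j)) ?_
    rw [xext_rep_ne hA hdisj hcover him hj]
    simp
  · exact zero_le

lemma xext_lev : levE A (xext hA hcover J i him) = (i : ℕ∞) := by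
  apply le_antisymm
  · refine Finset.sup_le fun j _ => ?_
    rcases eq_or_ne j J with rfl | hj
    · exact (xext_muJ hA hdisj hcover him).le
    · rw [xext_mu_ne hA hdisj hcover him hj]; exact zero_le
  · rw [← xext_muJ hA hdisj hcover him (J := J)]
    exact Finset.le_sup (Finset.mem_univ J)

lemma xext_MsupJ : Msup A (xext hA hcover J i him) J = (0 : ℕ∞) := by
  apply le_antisymm
  · exact Finset.sup_le fun j hj =>
      (xext_mu_ne hA hdisj hcover him (Finset.ne_of_mem_erase hj)).le
  · exact zero_le

lemma xext_Msup_ne {j : Fin k} (hj : j ≠ J) :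
    Msup A (xext hA hcover J i him) j = (i : ℕ∞) := by
  apply le_antisymm
  · exact (xext_lev hA hdisj hcover him) ▸ Msup_le _ j
  · rw [← xext_muJ hA hdisj hcover him (J := J)]
    exact Finset.le_sup (Finset.mem_erase.2 ⟨hj.symm, Finset.mem_univ J⟩)

lemma xext_s_low {a : Fin n} {j : Fin k} (ha : a ∈ A j) (hr : a ≠ rep hA j) :
    sfun hcover (xext hA hcover J i him) a ≤ (i : ℕ∞) := by
  rw [sfun_eq hdisj hcover ha]
  refine le_trans (Finset.inf_le (Finset.mem_erase.2 ⟨fun h => hr h.symm, rep_mem hA j⟩)) ?_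
  rcases eq_or_ne j J with rfl | hj
  · rw [xext_rep_J hA hdisj hcover him]
  · rw [xext_rep_ne hA hdisj hcover him hj]
    exact zero_le

lemma xext_s_high {j : Fin k} :
    ((m - 1 : ℕ) : ℕ∞) ≤ sfun hcover (xext hA hcover J i him) (rep hA j) := by
  rw [sfun_eq hdisj hcover (rep_mem hA j)]
  refine Finset.le_inf fun b hb => ?_
  rw [xext_nonrep hA hdisj hcover him (Finset.mem_of_mem_erase hb)
    (Finset.ne_of_mem_erase hb)]

lemma cnt_spec (hm : 2 ≤ m) {a : Fin n} {j : Fin k} (ha : a ∈ A j) :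
    cnt m i (Msup A (xext hA hcover J i him) (blk hcover a))
      (sfun hcover (xext hA hcover J i him) a) =
    if a = rep hA j then (if j = J then 0 else i)
    else (if j = J then m - 1 - i else m - 1) := by
  rw [blk_eq hdisj hcover ha]
  rcases eq_or_ne a (rep hA j) with rfl | hr
  · rw [if_pos rfl]
    have hs := xext_s_high hA hdisj hcover him (J := J) (j := j)
    rcases eq_or_ne j J with rfl | hj
    · rw [if_pos rfl, cnt, xext_MsupJ hA hdisj hcover him]
      split_ifs with h1 h2 h2
      · exfalso
        have hi0 : i ≤ 0 := by exact_mod_cast h1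
        have : m - 1 ≤ i := by exact_mod_cast le_trans hs h2
        omega
      · have : i ≤ 0 := by exact_mod_cast h1
        omega
      · have : m - 1 ≤ i := by exact_mod_cast le_trans hs h2
        omega
      · rfl
    · rw [if_neg hj, cnt, xext_Msup_ne hA hdisj hcover him hj]
      split_ifs with h1 h2 h2
      · have : m - 1 ≤ i := by exact_mod_cast le_trans hs h2
        omega
      · rfl
      · exact absurd le_rfl h1
      · exact absurd le_rfl h1
  · rw [if_neg hr]
    have hs := xext_s_low hA hdisj hcover (J := J) him ha hr
    rcases eq_or_ne j J with rfl | hj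
    · rw [if_pos rfl, cnt, xext_MsupJ hA hdisj hcover him]
      split_ifs with h1
      · have hi0 : i ≤ 0 := by exact_mod_cast h1
        omega
      · rfl
    · rw [if_neg hj, cnt, xext_Msup_ne hA hdisj hcover him hj]
      split_ifs with h1
      · rfl
      · exact absurd le_rfl h1

lemma xext_sum (hm : 2 ≤ m) (hn : 2 ≤ n) (hBJ : maxBlock A = (A J).card) :
    (∑ a : Fin n, (cnt m i (Msup A (xext hA hcover J i him) (blk hcover a))
      (sfun hcover (xext hA hcover J i him) a) : ℤ)) =
    ((m : ℤ) - 1) * ((n : ℤ) - (k : ℤ)) + (i : ℤ) * ((k : ℤ) - (maxBlock A : ℤ)) := by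
  rw [sum_split hdisj hcover]
  have hbs : ∀ j : Fin k, (∑ a ∈ A j, (cnt m i (Msup A (xext hA hcover J i him) (blk hcover a))
      (sfun hcover (xext hA hcover J i him) a) : ℤ)) =
      if j = J then (((A J).card : ℤ) - 1) * ((m : ℤ) - 1 - (i : ℤ))
      else ((((A j).card : ℤ) - 1) * ((m : ℤ) - 1) + (i : ℤ)) := by
    intro j
    have hsum : ∀ a ∈ (A j).erase (rep hA j),
        (cnt m i (Msup A (xext hA hcover J i him) (blk hcover a))
          (sfun hcover (xext hA hcover J i him) a) : ℤ) =
        if j = J then ((m : ℤ) - 1 - (i : ℤ)) else ((m : ℤ) - 1) := by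
      intro a haa
      rw [cnt_spec hA hdisj hcover him hm (Finset.mem_of_mem_erase haa),
        if_neg (Finset.ne_of_mem_erase haa)]
      rcases eq_or_ne j J with rfl | hj
      · rw [if_pos rfl, if_pos rfl]; omega
      · rw [if_neg hj, if_neg hj]; omega
    conv_lhs => rw [← Finset.insert_erase (rep_mem hA j)]
    rw [Finset.sum_insert (Finset.notMem_erase _ _), Finset.sum_congr rfl hsum,
      Finset.sum_const, Finset.card_erase_of_mem (rep_mem hA j), nsmul_eq_mul,
      cnt_spec hA hdisj hcover him hm (rep_mem hA j), if_pos rfl]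
    have hb1 : 1 ≤ (A j).card := Finset.card_pos.2 (hA j)
    have hcast : (((A j).card - 1 : ℕ) : ℤ) = ((A j).card : ℤ) - 1 := by
      push_cast [Nat.cast_sub hb1]; ring
    rw [hcast]
    split_ifs with h
    · subst h; push_cast; ring
    · push_cast; ring
  rw [Finset.sum_congr rfl fun j _ => hbs j]
  set u := (((A J).card : ℤ) - 1) * ((m : ℤ) - 1 - (i : ℤ)) with hu
  set v := fun j : Fin k => ((((A j).card : ℤ) - 1) * ((m : ℤ) - 1) + (i : ℤ)) with hv
  have h1 : ∑ j ∈ Finset.univ.erase J, (if j = J then u else v j) + (if J = J then u else v J)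
      = ∑ j : Fin k, (if j = J then u else v j) :=
    Finset.sum_erase_add _ _ (Finset.mem_univ J)
  have h2 : ∑ j ∈ Finset.univ.erase J, (if j = J then u else v j)
      = ∑ j ∈ Finset.univ.erase J, v j :=
    Finset.sum_congr rfl fun j hj => if_neg (Finset.ne_of_mem_erase hj)
  have h3 : ∑ j ∈ Finset.univ.erase J, v j + v J = ∑ j : Fin k, v j :=
    Finset.sum_erase_add _ _ (Finset.mem_univ J)
  have h4 : ∑ j : Fin k, v j = ((n : ℤ) - (k : ℤ)) * ((m : ℤ) - 1) + (k : ℤ) * (i : ℤ) :=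
    univ_sum_g hdisj hcover i
  rw [← h1, h2, if_pos rfl]
  have hvJ : v J = (((A J).card : ℤ) - 1) * ((m : ℤ) - 1) + (i : ℤ) := rfl
  have h5 : ∑ j ∈ Finset.univ.erase J, v j
      = ((n : ℤ) - (k : ℤ)) * ((m : ℤ) - 1) + (k : ℤ) * (i : ℤ) - v J := by linarith
  rw [h5, hvJ, hu, hBJ]
  ring

end Extremal

section MaxJ
variable {m n k : ℕ} {A : Fin k → Finset (Fin n)}
lemma exists_maxJ (hcover : Finset.univ.biUnion A = (Finset.univ : Finset (Fin n)))
    (hn : 2 ≤ n) : ∃ J : Fin k, maxBlock A = (A J).card := by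
  have hk : 0 < k := k_pos hcover (by omega)
  have hne : (Finset.univ : Finset (Fin k)).Nonempty := ⟨⟨0, hk⟩, Finset.mem_univ _⟩
  obtain ⟨J, _, hJ⟩ := Finset.exists_mem_eq_sup Finset.univ hne fun j => (A j).card
  exact ⟨J, hJ⟩
end MaxJ

section Assemble
variable {m n k : ℕ} {A : Fin k → Finset (Fin n)}

lemma minDeg_Gset (hA : ∀ j, (A j).Nonempty)
    (hdisj : ∀ i j : Fin k, i ≠ j → Disjoint (A i) (A j))
    (hcover : Finset.univ.biUnion A = (Finset.univ : Finset (Fin n)))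
    (hm : 2 ≤ m) (hn : 2 ≤ n) {i : ℕ} (him : i < m) :
    0 ≤ ((m:ℤ)-1)*((n:ℤ)-(k:ℤ)) + (i:ℤ)*((k:ℤ)-(maxBlock A:ℤ)) ∧
    minDeg (Gset m n k A i) =
      (((((m:ℤ)-1)*((n:ℤ)-(k:ℤ)) + (i:ℤ)*((k:ℤ)-(maxBlock A:ℤ))).toNat : ℕ) : ℕ∞) := by
  obtain ⟨J, hBJ⟩ := exists_maxJ hcover hn
  set Dz : ℤ := ((m:ℤ)-1)*((n:ℤ)-(k:ℤ)) + (i:ℤ)*((k:ℤ)-(maxBlock A:ℤ)) with hDz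
  set x0 := xext hA hcover J i him with hx0
  have hlev : levE A x0 = (i:ℕ∞) := xext_lev hA hdisj hcover him
  have hmem : x0 ∈ Gset m n k A i := (mem_Gset_iff hA hm him).2 hlev
  have hdeg : (indDeg (Gset m n k A i) x0 : ℤ) = Dz := by
    rw [deg_formula hA hdisj hcover hm him hlev]
    push_cast
    exact xext_sum hA hdisj hcover him hm hn hBJ
  have hnn : 0 ≤ Dz := hdeg ▸ Int.natCast_nonneg _
  refine ⟨hnn, ?_⟩
  have hx0deg : indDeg (Gset m n k A i) x0 = Dz.toNat := by omega
  have hlb : ∀ y ∈ Gset m n k A i, Dz.toNat ≤ indDeg (Gset m n k A i) y := by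
    intro y hy
    have hylev := (mem_Gset_iff hA hm him).1 hy
    have h1 := total_lb hA hdisj hcover him hylev
    have h2 : Dz ≤ (indDeg (Gset m n k A i) y : ℤ) := by
      rw [deg_formula hA hdisj hcover hm him hylev]
      push_cast
      exact h1
    omega
  apply le_antisymm
  · exact le_trans (Finset.inf_le hmem) (by rw [hx0deg])
  · exact Finset.le_inf fun y hy => by exact_mod_cast hlb y hy

lemma k_le_n (hA : ∀ j, (A j).Nonempty)
    (hdisj : ∀ i j : Fin k, i ≠ j → Disjoint (A i) (A j))
    (hcover : Finset.univ.biUnion A = (Finset.univ : Finset (Fin n))) : k ≤ n := by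
  have hsum := card_sum hdisj hcover
  calc k = ∑ _j : Fin k, 1 := by simp
  _ ≤ ∑ j : Fin k, (A j).card :=
    Finset.sum_le_sum fun j _ => Finset.card_pos.2 (hA j)
  _ = n := hsum

lemma maxBlock_le_n (hA : ∀ j, (A j).Nonempty)
    (hdisj : ∀ i j : Fin k, i ≠ j → Disjoint (A i) (A j))
    (hcover : Finset.univ.biUnion A = (Finset.univ : Finset (Fin n))) : maxBlock A ≤ n := by
  have hsum := card_sum hdisj hcover
  refine Finset.sup_le fun j _ => ?_
  have h1 : (A j).card ≤ ∑ j' : Fin k, (A j').card :=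
    Finset.single_le_sum (fun (a : Fin k) (_ : a ∈ Finset.univ) => Nat.zero_le ((A a).card))
      (Finset.mem_univ j)
  rw [hsum] at h1
  exact h1
end Assemble

end HamAux

open HamAux in
theorem stmt11 (m n k : ℕ) (hm : 2 ≤ m) (hn : 2 ≤ n)
    (A : Fin k → Finset (Fin n))
    (hA : ∀ j, (A j).Nonempty)
    (hdisj : ∀ i j : Fin k, i ≠ j → Disjoint (A i) (A j))
    (hcover : Finset.univ.biUnion A = (Finset.univ : Finset (Fin n))) :
    (∀ x : Fin n → Fin m, ∃! i : ℕ, i < m ∧ x ∈ Gset m n k A i) ∧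
    (∀ i < m, minDeg (Gset m n k A i) ≠ ⊤ ∧
        ((minDeg (Gset m n k A i)).toNat : ℤ) =
          ((m : ℤ) - 1) * ((n : ℤ) - (k : ℤ)) +
            (i : ℤ) * ((k : ℤ) - (maxBlock A : ℤ))) ∧
    ((((m - 1) * n : ℕ) : ℕ∞) -
        (Finset.range m).inf (fun i => minDeg (Gset m n k A i)) =
      (((m - 1) * max k (maxBlock A) : ℕ) : ℕ∞)) := by
  refine ⟨?_, ?_, ?_⟩
  · -- part 1: partition
    intro x
    have hle : levE A x ≤ ((m - 1 : ℕ) : ℕ∞) := levE_le A hA x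
    have hne : levE A x ≠ ⊤ := ne_top_of_le_ne_top (ENat.coe_ne_top _) hle
    set i := (levE A x).toNat with hi
    have hcast : ((i : ℕ) : ℕ∞) = levE A x := ENat.coe_toNat hne
    have him : i < m := by
      have h1 : ((i : ℕ) : ℕ∞) ≤ ((m - 1 : ℕ) : ℕ∞) := hcast ▸ hle
      have h2 : i ≤ m - 1 := by exact_mod_cast h1
      omega
    refine ⟨i, ⟨him, (mem_Gset_iff hA hm him).2 hcast.symm⟩, ?_⟩
    rintro j ⟨hjm, hj⟩
    have hj2 := (mem_Gset_iff hA hm hjm).1 hj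
    have h3 : ((j : ℕ) : ℕ∞) = ((i : ℕ) : ℕ∞) := by
      rw [← hj2]; exact hcast.symm
    exact_mod_cast h3
  · -- part 2: min degrees
    intro i him
    obtain ⟨hnn, hmin⟩ := minDeg_Gset hA hdisj hcover hm hn him
    refine ⟨by rw [hmin]; exact ENat.coe_ne_top _, ?_⟩
    rw [hmin, ENat.toNat_coe]
    exact Int.toNat_of_nonneg hnn
  · -- part 3
    have hmax_n : max k (maxBlock A) ≤ n :=
      max_le (k_le_n hA hdisj hcover) (maxBlock_le_n hA hdisj hcover)
    set B := maxBlock A with hB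
    set q : ℕ := (m - 1) * (n - max k B) with hq
    have hq1 : (q : ℤ) = ((m : ℤ) - 1) * ((n : ℤ) - ((max k B : ℕ) : ℤ)) := by
      rw [hq]
      push_cast [Nat.cast_sub hmax_n, Nat.cast_sub (show 1 ≤ m by omega)]
      ring
    have hinf : (Finset.range m).inf (fun i => minDeg (Gset m n k A i)) = (q : ℕ∞) := by
      apply le_antisymm
      · rcases le_or_gt B k with hc | hc
        · have h0m : 0 < m := by omega
          refine le_trans (Finset.inf_le (Finset.mem_range.2 h0m)) ?_
          rw [(minDeg_Gset hA hdisj hcover hm hn h0m).2]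
          have hz : ((m:ℤ)-1)*((n:ℤ)-(k:ℤ)) + ((0:ℕ):ℤ)*((k:ℤ)-(B:ℤ)) = (q:ℤ) := by
            rw [hq1, max_eq_left hc]
            push_cast
            ring
          have h2 : (((m:ℤ)-1)*((n:ℤ)-(k:ℤ)) + ((0:ℕ):ℤ)*((k:ℤ)-(B:ℤ))).toNat = q := by
            omega
          rw [h2]
        · have h1m : m - 1 < m := by omega
          refine le_trans (Finset.inf_le (Finset.mem_range.2 h1m)) ?_
          rw [(minDeg_Gset hA hdisj hcover hm hn h1m).2]
          have hz : ((m:ℤ)-1)*((n:ℤ)-(k:ℤ)) + (((m-1:ℕ)):ℤ)*((k:ℤ)-(B:ℤ)) = (q:ℤ) := by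
            rw [hq1, max_eq_right hc.le]
            push_cast [Nat.cast_sub (show 1 ≤ m by omega)]
            ring
          have h2 : (((m:ℤ)-1)*((n:ℤ)-(k:ℤ)) + (((m-1:ℕ)):ℤ)*((k:ℤ)-(B:ℤ))).toNat = q := by
            omega
          rw [h2]
      · refine Finset.le_inf fun i hi => ?_
        have him := Finset.mem_range.1 hi
        rw [(minDeg_Gset hA hdisj hcover hm hn him).2]
        have h3 : (q : ℤ) ≤ ((m:ℤ)-1)*((n:ℤ)-(k:ℤ)) + (i:ℤ)*((k:ℤ)-(B:ℤ)) := by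
          have hiz : (0:ℤ) ≤ (i:ℤ) := Int.natCast_nonneg i
          have himz : (i:ℤ) ≤ (m:ℤ) - 1 := by
            have : (i:ℤ) < (m:ℤ) := by exact_mod_cast him
            omega
          rcases le_or_gt B k with hc | hc
          · rw [hq1, max_eq_left hc]
            have hkB : (0:ℤ) ≤ (k:ℤ) - (B:ℤ) := by
              have : (B:ℤ) ≤ (k:ℤ) := by exact_mod_cast hc
              omega
            nlinarith [mul_nonneg hiz hkB]
          · rw [hq1, max_eq_right hc.le]
            have hBk : (0:ℤ) ≤ (B:ℤ) - (k:ℤ) := by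
              have : (k:ℤ) ≤ (B:ℤ) := by exact_mod_cast hc.le
              omega
            nlinarith [mul_nonneg (by omega : (0:ℤ) ≤ (m:ℤ) - 1 - (i:ℤ)) hBk]
        have h4 : q ≤ (((m:ℤ)-1)*((n:ℤ)-(k:ℤ)) + (i:ℤ)*((k:ℤ)-(B:ℤ))).toNat := by omega
        exact_mod_cast Nat.cast_le.2 h4
    rw [hinf, ← ENat.coe_sub]
    have h5 : (m - 1) * n - q = (m - 1) * max k B := by
      refine Nat.sub_eq_of_eq_add ?_
      rw [hq, ← Nat.mul_add, Nat.add_sub_cancel' hmax_n]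
    rw [h5]
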